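/- Let N ≥ 1 and let α¹, …, α^N ∈ (0,1) with Σ_{i=1}^N α^i = 1. For μ, ν ∈ ℝ^N define A[μ] = Σ_{i=1}^N α^i μ^i and f^i(μ, ν) = −(1/2)(ν^i)² + (1/2)A[μ]² − A[μ] μ^i for i = 1, …, N. Then: (i) for each i, −f^i(μ, ν) ≤ (1/2)((μ^i)² + (ν^i)²); (ii) Σ_{i=1}^N α^i f^i(μ, ν) = −(1/2) Σ_{i=1}^N α^i (ν^i)² − (1/2) A[μ]² ≤ 0; and (iii) the vectors −e₁, …, −e_N, (α¹, …, α^N) positively span ℝ^N, where e₁, …, e_N is the standard basis. Consequently, the generator of the incomplete-equilibrium BSDE system satisfies the a-priori boundedness condition (AB) with l ≡ 0 and this positively spanning set. -/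
import Mathlib


open Matrix

/-- The generator `f` of the incomplete-equilibrium BSDE system, with weights
`α^i ∈ (0,1)`, `Σ α^i = 1` and `A[μ] = Σ α^i μ^i`, satisfies:
(i) `-f^i ≤ ½((μ^i)² + (ν^i)²)`;
(ii) `Σ α^i f^i = -½ Σ α^i (ν^i)² - ½ A[μ]² ≤ 0`;
(iii) the vectors `-e₁, …, -e_N, (α¹,…,α^N)` positively span `ℝ^N`;
consequently `f` satisfies condition (AB) with `l ≡ 0` and this spanning set. -/
theorem stmt14 (N : ℕ) (hN : 1 ≤ N) (α : Fin N → ℝ)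
    (hα : ∀ i, α i ∈ Set.Ioo (0:ℝ) 1) (hsum : ∑ i, α i = 1) :
    let A : (Fin N → ℝ) → ℝ := fun μ => ∑ i, α i * μ i
    let f : (Fin N → ℝ) → (Fin N → ℝ) → (Fin N → ℝ) :=
      fun μ ν i => -(1/2) * (ν i)^2 + (1/2) * (A μ)^2 - A μ * μ i
    (∀ μ ν i, -(f μ ν i) ≤ (1/2) * ((μ i)^2 + (ν i)^2)) ∧
    (∀ μ ν, (∑ i, α i * f μ ν i = -(1/2) * (∑ i, α i * (ν i)^2) - (1/2) * (A μ)^2) ∧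
      ∑ i, α i * f μ ν i ≤ 0) ∧
    (let a : Fin (N+1) → (Fin N → ℝ) :=
       fun k => Fin.lastCases (fun i => α i) (fun (i : Fin N) => -(Pi.single i 1)) k
     (∀ k, a k ≠ 0) ∧
     (∀ v : Fin N → ℝ, ∃ lam : Fin (N+1) → ℝ, (∀ k, 0 ≤ lam k) ∧ ∑ k, lam k • a k = v) ∧
     (∀ μ ν k, (a k) ⬝ᵥ (f μ ν) ≤ 0 + (1/2) * (((a k) ⬝ᵥ μ)^2 + ((a k) ⬝ᵥ ν)^2))) := by
  intro A f
  have hNe : (Finset.univ : Finset (Fin N)).Nonempty := by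
    have : Nonempty (Fin N) := Fin.pos_iff_nonempty.mp hN
    exact Finset.univ_nonempty
  -- (i)
  have part1 : ∀ μ ν i, -(f μ ν i) ≤ (1/2) * ((μ i)^2 + (ν i)^2) := by
    intro μ ν i
    simp only [f]
    nlinarith [sq_nonneg (μ i - A μ)]
  -- (ii)
  have part2 : ∀ μ ν, (∑ i, α i * f μ ν i =
      -(1/2) * (∑ i, α i * (ν i)^2) - (1/2) * (A μ)^2) ∧ ∑ i, α i * f μ ν i ≤ 0 := by
    intro μ ν
    have key : ∑ i, α i * f μ ν i
        = -(1/2) * (∑ i, α i * (ν i)^2) - (1/2) * (A μ)^2 := by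
      simp only [f]
      have : ∀ i, α i * (-(1/2) * (ν i)^2 + (1/2) * (A μ)^2 - A μ * μ i)
          = -(1/2) * (α i * (ν i)^2) + (1/2) * (A μ)^2 * α i - A μ * (α i * μ i) := by
        intro i; ring
      rw [Finset.sum_congr rfl fun i _ => this i]
      rw [Finset.sum_sub_distrib, Finset.sum_add_distrib, ← Finset.mul_sum,
        ← Finset.mul_sum, ← Finset.mul_sum, hsum]
      show -(1/2) * _ + (1/2) * (A μ)^2 * 1 - A μ * A μ = _
      ring
    refine ⟨key, ?_⟩
    rw [key]
    have h1 : (0:ℝ) ≤ ∑ i, α i * (ν i)^2 :=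
      Finset.sum_nonneg fun i _ => mul_nonneg (hα i).1.le (sq_nonneg _)
    nlinarith [sq_nonneg (A μ)]
  refine ⟨part1, part2, ?_⟩
  intro a
  have haLast : a (Fin.last N) = fun i => α i := by
    simp [a]
  have haCast : ∀ i : Fin N, a i.castSucc = -(Pi.single i 1) := by
    intro i; simp [a]
  refine ⟨?_, ?_, ?_⟩
  · -- nonzero
    intro k
    induction k using Fin.lastCases with
    | last =>
      rw [haLast]
      intro h
      have := congrFun h ⟨0, hN⟩
      exact absurd this (ne_of_gt (hα _).1)
    | cast i =>
      rw [haCast]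
      intro h
      have := congrFun h i
      simp [Pi.single_apply] at this
  · -- positive spanning
    intro v
    set c : ℝ := max 0 (Finset.univ.sup' hNe fun i => v i / α i) with hc
    have hc0 : 0 ≤ c := le_max_left _ _
    have hci : ∀ i, v i ≤ c * α i := by
      intro i
      have h1 : v i / α i ≤ c :=
        le_trans (Finset.le_sup' (fun i => v i / α i) (Finset.mem_univ i)) (le_max_right _ _)
      have := mul_le_mul_of_nonneg_right h1 (hα i).1.le
      rwa [div_mul_cancel₀ _ (ne_of_gt (hα i).1)] at this
    refine ⟨Fin.lastCases c (fun i => c * α i - v i), ?_, ?_⟩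
    · intro k
      induction k using Fin.lastCases with
      | last => simpa using hc0
      | cast i => simpa using hci i
    · rw [Fin.sum_univ_castSucc]
      simp only [Fin.lastCases_last, Fin.lastCases_castSucc, haLast, haCast]
      funext j
      simp only [Pi.add_apply, Finset.sum_apply, Pi.smul_apply, Pi.neg_apply,
        Pi.single_apply, smul_eq_mul, mul_neg, mul_ite, mul_one, mul_zero]
      have hswap : ∀ x : Fin N, -(if j = x then c * α x - v x else 0)
          = if j = x then -(c * α x - v x) else 0 := fun x => by split <;> simp
      rw [Finset.sum_congr rfl fun x _ => hswap x, Finset.sum_ite_eq]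
      simp
  · -- (AB)
    intro μ ν k
    induction k using Fin.lastCases with
    | last =>
      rw [haLast]
      have hdot : ∀ w : Fin N → ℝ, (fun i => α i) ⬝ᵥ w = ∑ i, α i * w i := by
        intro w; rfl
      rw [hdot]
      have h := (part2 μ ν).2
      have : (0:ℝ) ≤ (1/2) * (((fun i => α i) ⬝ᵥ μ)^2 + ((fun i => α i) ⬝ᵥ ν)^2) := by
        positivity
      linarith
    | cast i =>
      rw [haCast]
      have hd : ∀ w : Fin N → ℝ, (-(Pi.single i 1) : Fin N → ℝ) ⬝ᵥ w = -(w i) := by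
        intro w
        rw [neg_dotProduct, single_dotProduct, one_mul]
      rw [hd, hd, hd]
      have h := part1 μ ν i
      have : (-(μ i))^2 = (μ i)^2 := by ring
      rw [this]
      have : (-(ν i))^2 = (ν i)^2 := by ring
      rw [this]
      linarith
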